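/- There exists an absolute constant C > 0 such that for every positive integer N, every constant 0 < c ≤ 1, every real z with 1 − 1/N ≤ z ≤ 1, and every N×N unitary matrix U, setting z₀ = 1 − 1/N, one has | ∑_{j : |θ_j| ≥ c/N} ( 1/(z − e^{iθ_j}) − 1/(z₀ − e^{iθ_j}) ) | ≤ (C/(cN)) · ∑_{j=1}^N 1/|z₀ − e^{iθ_j}|². -/

import Mathlib

open Matrix
open scoped Classical

/-- The multiset of eigenvalues of `U` (roots of its characteristic polynomial,
listed with multiplicity); each eigenvalue is `e^{iθ_j}` with `θ_j = arg` in `(-π, π]`. -/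
noncomputable def eigenvalues (N : ℕ) (U : Matrix.unitaryGroup (Fin N) ℂ) : Multiset ℂ :=
  (Matrix.charpoly (U : Matrix (Fin N) (Fin N) ℂ)).roots

open Polynomial Real in
lemma abs_eigenvalue_eq_one {N : ℕ} (U : Matrix.unitaryGroup (Fin N) ℂ) {μ : ℂ}
    (hμ : μ ∈ eigenvalues N U) : ‖μ‖ = 1 := by
  have hroot : ((U : Matrix (Fin N) (Fin N) ℂ).charpoly).IsRoot μ :=
    (Polynomial.mem_roots'.mp hμ).2
  have heval : ((U : Matrix (Fin N) (Fin N) ℂ).charpoly).eval μ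
      = (μ • (1 : Matrix (Fin N) (Fin N) ℂ) - U).det := by
    rw [Matrix.charpoly, ← Polynomial.coe_evalRingHom, RingHom.map_det]
    congr 1
    ext i j
    by_cases h : i = j <;>
      simp [h, Matrix.charmatrix_apply, Matrix.one_apply, Matrix.diagonal]
  have hdet : (μ • (1 : Matrix (Fin N) (Fin N) ℂ) - U).det = 0 := by
    rw [← heval]; exact hroot
  obtain ⟨v, hv0, hv⟩ := (Matrix.exists_mulVec_eq_zero_iff).mpr hdet
  have hUv : (U : Matrix (Fin N) (Fin N) ℂ) *ᵥ v = μ • v := by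
    have h := hv
    rw [Matrix.sub_mulVec, Matrix.smul_mulVec, Matrix.one_mulVec, sub_eq_zero] at h
    exact h.symm
  have hstar : (U : Matrix (Fin N) (Fin N) ℂ)ᴴ * U = 1 := U.2.1
  have key : star ((U : Matrix (Fin N) (Fin N) ℂ) *ᵥ v) ⬝ᵥ ((U : Matrix (Fin N) (Fin N) ℂ) *ᵥ v)
      = star v ⬝ᵥ v := by
    rw [Matrix.star_mulVec, ← Matrix.dotProduct_mulVec, Matrix.mulVec_mulVec, hstar,
      Matrix.one_mulVec]
  rw [hUv, star_smul, smul_dotProduct, dotProduct_smul, smul_smul] at key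
  have hd : star v ⬝ᵥ v ≠ 0 := by
    have h7 : star v ⬝ᵥ v = ((∑ i, Complex.normSq (v i) : ℝ) : ℂ) := by
      simp [dotProduct, Complex.normSq_eq_conj_mul_self, Pi.star_apply]
    rw [h7]
    have hpos : 0 < ∑ i, Complex.normSq (v i) := by
      obtain ⟨i, hi⟩ := Function.ne_iff.mp hv0
      exact Finset.sum_pos' (fun j _ => Complex.normSq_nonneg _)
        ⟨i, Finset.mem_univ i, by simpa [Complex.normSq_pos] using hi⟩
    exact_mod_cast hpos.ne'
  have hμ1 : star μ * μ = 1 := by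
    have h2 : (star μ * μ) • (star v ⬝ᵥ v) = (1 : ℂ) • (star v ⬝ᵥ v) := by
      rw [key, one_smul]
    exact smul_left_injective ℂ hd h2
  have hns : Complex.normSq μ = 1 := by
    have h8 : ((Complex.normSq μ : ℝ) : ℂ) = 1 := by
      rw [← hμ1]; simp [Complex.normSq_eq_conj_mul_self]
    exact_mod_cast h8
  rw [← Complex.sq_norm] at hns
  nlinarith [norm_nonneg μ]

open Real in
lemma abs_sub_eigen_lower {x t : ℝ} (hx0 : 0 ≤ x) {μ : ℂ}
    (hμ : ‖μ‖ = 1) (ht0 : 0 < t) (ht1 : t ≤ 1) (harg : t ≤ |μ.arg|) :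
    3 / 4 * t ≤ ‖(x : ℂ) - μ‖ := by
  have hμ0 : μ ≠ 0 := by
    intro h; rw [h] at hμ; simp at hμ
  set θ := μ.arg with hθ
  have hre : μ.re = Real.cos θ := by
    rw [Complex.cos_arg hμ0, hμ, div_one]
  have him : μ.im = Real.sin θ := by
    rw [Complex.sin_arg, hμ, div_one]
  rcases le_or_gt |θ| (π / 2) with h | h
  · -- |sin θ| ≥ sin t ≥ 3/4 t
    have habs : |Real.sin θ| = Real.sin |θ| := by
      rcases abs_cases θ with ⟨h1, h2⟩ | ⟨h1, h2⟩
      · rw [h1, abs_of_nonneg (Real.sin_nonneg_of_nonneg_of_le_pi h2 (by linarith [Real.pi_pos]))]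
      · rw [h1, Real.sin_neg]
        exact abs_of_nonpos
          (Real.sin_nonpos_of_nonpos_of_neg_pi_le h2.le (by linarith [Real.pi_pos]))
    have hmono : Real.sin t ≤ Real.sin |θ| := by
      apply Real.strictMonoOn_sin.monotoneOn ⟨by linarith [Real.pi_gt_three], by
        linarith [Real.pi_gt_three]⟩ ⟨by linarith [abs_nonneg θ, Real.pi_pos], h⟩ harg
    have hcube : 3 / 4 * t ≤ Real.sin t := by
      have h5 := Real.sin_gt_sub_cube ht0
      have h6 : t ^ 3 ≤ t := pow_le_of_le_one ht0.le ht1 (by norm_num)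
      linarith
    calc 3 / 4 * t ≤ |Real.sin θ| := by rw [habs]; linarith
      _ = |((x:ℂ) - μ).im| := by simp [him]
      _ ≤ ‖(x:ℂ) - μ‖ := Complex.abs_im_le_norm _
  · -- cos θ ≤ 0, so |x - μ| ≥ 1
    have hθpi : |θ| ≤ π := Complex.abs_arg_le_pi μ
    have hcos : Real.cos θ ≤ 0 := by
      rw [← Real.cos_abs]
      exact Real.cos_nonpos_of_pi_div_two_le_of_le h.le (by linarith [Real.pi_pos])
    have hsq : 1 ≤ ‖(x:ℂ) - μ‖ ^ 2 := by
      rw [Complex.sq_norm, Complex.normSq_apply]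
      have hsc := Real.sin_sq_add_cos_sq θ
      simp only [Complex.sub_re, Complex.ofReal_re, Complex.sub_im, Complex.ofReal_im, hre, him]
      nlinarith
    nlinarith [norm_nonneg ((x:ℂ) - μ)]

/-- There is an absolute constant `C > 0` such that for every `N ≥ 1`, every
`0 < c ≤ 1`, every real `1 - 1/N ≤ z ≤ 1` and every unitary `U`, with `z₀ = 1 - 1/N`,
`|∑_{j : |θ_j| ≥ c/N} (1/(z - e^{iθ_j}) - 1/(z₀ - e^{iθ_j}))|
  ≤ (C/(cN)) ∑_{j=1}^N 1/|z₀ - e^{iθ_j}|²`. -/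
theorem X2_pointwise_bound :
    ∃ C : ℝ, 0 < C ∧
      ∀ (N : ℕ), 0 < N → ∀ c : ℝ, 0 < c → c ≤ 1 →
        ∀ z : ℝ, 1 - 1 / N ≤ z → z ≤ 1 →
          ∀ (U : Matrix.unitaryGroup (Fin N) ℂ),
            ‖
                (((eigenvalues N U).filter (fun lam => c / N ≤ |Complex.arg lam|)).map
                  (fun lam =>
                    ((z : ℂ) - lam)⁻¹ - (((1 - 1 / N : ℝ) : ℂ) - lam)⁻¹)).sum‖
              ≤ C / (c * N) *
                (((eigenvalues N U).map
                  (fun lam => (‖((1 - 1 / N : ℝ) : ℂ) - lam‖ ^ 2)⁻¹)).sum) := by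
  refine ⟨3, by norm_num, ?_⟩
  intro N hN c hc hc1 z hz1 hz2 U
  have hNR : (0:ℝ) < N := by exact_mod_cast hN
  have hN1 : (1:ℝ) ≤ N := by exact_mod_cast hN
  have hNinv : 1 / (N:ℝ) ≤ 1 := by
    rw [div_le_one hNR]; exact hN1
  have hNinv0 : 0 < 1 / (N:ℝ) := by positivity
  set t : ℝ := c / N with htdef
  have ht0 : 0 < t := by positivity
  have ht1 : t ≤ 1 := by
    rw [htdef, div_le_one hNR]; linarith
  set K := eigenvalues N U with hK
  set p : ℂ → Prop := fun lam => c / N ≤ |Complex.arg lam| with hp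
  set f : ℂ → ℂ := fun lam => ((z : ℂ) - lam)⁻¹ - (((1 - 1 / N : ℝ) : ℂ) - lam)⁻¹ with hf
  set g : ℂ → ℝ := fun lam => (‖((1 - 1 / N : ℝ) : ℂ) - lam‖ ^ 2)⁻¹ with hg
  have hg0 : ∀ lam, 0 ≤ g lam := fun lam => by positivity
  -- pointwise bound on filtered eigenvalues
  have hpt : ∀ μ ∈ K.filter p, ‖f μ‖ ≤ 3 / (c * N) * g μ := by
    intro μ hμmem
    have hμK : μ ∈ K := Multiset.mem_of_mem_filter hμmem
    have hμp : t ≤ |μ.arg| := by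
      have := Multiset.of_mem_filter (p := p) hμmem
      exact this
    have hμ1 : ‖μ‖ = 1 := abs_eigenvalue_eq_one U hμK
    set a : ℝ := ‖(z : ℂ) - μ‖ with hadef
    set b : ℝ := ‖(((1 - 1 / N : ℝ)) : ℂ) - μ‖ with hbdef
    have ha : 3 / 4 * t ≤ a := abs_sub_eigen_lower (by linarith) hμ1 ht0 ht1 hμp
    have hb : 3 / 4 * t ≤ b :=
      abs_sub_eigen_lower (by linarith) hμ1 ht0 ht1 hμp
    have ha0 : 0 < a := lt_of_lt_of_le (by positivity) ha
    have hb0 : 0 < b := lt_of_lt_of_le (by positivity) hb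
    have haz : ((z : ℂ) - μ) ≠ 0 := by
      intro h; rw [hadef, h] at ha0; simp at ha0
    have hbz : ((((1 - 1 / N : ℝ)) : ℂ) - μ) ≠ 0 := by
      intro h; rw [hbdef, h] at hb0; simp at hb0
    -- the difference of reciprocals
    have hfe : f μ = ((((1 - 1 / N : ℝ)) : ℂ) - (z : ℂ)) *
        (((z : ℂ) - μ)⁻¹ * ((((1 - 1 / N : ℝ)) : ℂ) - μ)⁻¹) := by
      show ((z : ℂ) - μ)⁻¹ - ((((1 - 1 / N : ℝ)) : ℂ) - μ)⁻¹ = _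
      rw [inv_sub_inv haz hbz, div_eq_mul_inv, mul_inv]
      ring
    have habsf : ‖f μ‖ =
        ‖(((1 - 1 / N : ℝ)) : ℂ) - (z : ℂ)‖ * (a⁻¹ * b⁻¹) := by
      rw [hfe, norm_mul, norm_mul, norm_inv, norm_inv]
    have hdiff : ‖(((1 - 1 / N : ℝ)) : ℂ) - (z : ℂ)‖ ≤ 1 / N := by
      rw [← Complex.ofReal_sub, Complex.norm_real, Real.norm_eq_abs, abs_of_nonpos (by linarith)]
      linarith
    have htri : b ≤ a + 1 / N := by
      calc b = ‖((z : ℂ) - μ) + ((((1 - 1 / N : ℝ)) : ℂ) - (z : ℂ))‖ := by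
            rw [hbdef]; ring_nf
        _ ≤ a + ‖(((1 - 1 / N : ℝ)) : ℂ) - (z : ℂ)‖ := norm_add_le _ _
        _ ≤ a + 1 / N := by linarith
    -- key: c * b ≤ 3 * a
    have hkey : c * b ≤ 3 * a := by
      have h1N : c * (1 / N) = t := by rw [htdef]; ring
      nlinarith [mul_le_mul_of_nonneg_left htri hc.le]
    calc ‖f μ‖ ≤ (1 / N) * (a⁻¹ * b⁻¹) := by
          rw [habsf]
          exact mul_le_mul_of_nonneg_right hdiff (by positivity)
      _ ≤ 3 / (c * N) * g μ := by
          have hgμ : g μ = (b ^ 2)⁻¹ := rfl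
          rw [hgμ]
          have e1 : (1 / (N:ℝ)) * (a⁻¹ * b⁻¹) = (c * b) / (c * N * a * b ^ 2) := by
            field_simp
          have e2 : 3 / (c * (N:ℝ)) * (b ^ 2)⁻¹ = (3 * a) / (c * N * a * b ^ 2) := by
            field_simp
          rw [e1, e2]
          exact (div_le_div_iff_of_pos_right (by positivity)).mpr hkey
  -- assemble the sum bound
  have hsplit : (K.map g).sum
      = ((K.filter p).map g).sum + ((K.filter (fun a => ¬ p a)).map g).sum := by
    conv_lhs => rw [← Multiset.filter_add_not p K]
    rw [Multiset.map_add, Multiset.sum_add]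
  calc ‖((K.filter p).map f).sum‖
      ≤ (((K.filter p).map f).map (fun x => ‖x‖)).sum := by
        simpa using norm_multiset_sum_le ((K.filter p).map f)
    _ = ((K.filter p).map (fun μ => ‖f μ‖)).sum := by
        rw [Multiset.map_map]; rfl
    _ ≤ ((K.filter p).map (fun μ => 3 / (c * N) * g μ)).sum :=
        Multiset.sum_map_le_sum_map _ _ hpt
    _ = 3 / (c * N) * ((K.filter p).map g).sum := Multiset.sum_map_mul_left
    _ ≤ 3 / (c * N) * (K.map g).sum := by
        apply mul_le_mul_of_nonneg_left _ (by positivity)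
        rw [hsplit]
        refine le_add_of_nonneg_right (Multiset.sum_nonneg ?_)
        intro x hx
        obtain ⟨y, _, rfl⟩ := Multiset.mem_map.mp hx
        exact hg0 y
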